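/- Let g ∈ ℂ and suppose q₁, …, q_n : ℝ → ℂ, p₁,…,p_n : ℝ → ℂ satisfy the reduced Calogero–Painlevé II equations q_i' = p_i, p_i' = 2q_i³ + t q_i + g²/(4 q_i³) + 4g² Σ_{j≠i} q_i(q_i² + 3 q_j²)/(q_i² − q_j²)², with all q_i nonzero and q_i² pairwise distinct. Define Q̆_i = −2^{-1/3}(p_i/q_i − i g/(2 q_i²)), P̆_i = 2^{1/3} q_i², s = −2^{1/3} t. Then dP̆_i/ds = 2 P̆_i Q̆_i − i g and dQ̆_i/ds = P̆_i − Q̆_i² − s/2 + 4g² Σ_{j≠i} (P̆_i + 3P̆_j)/(P̆_i − P̆_j)³. -/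

import Mathlib

open Finset

/-- The cube root of 2. -/
noncomputable def c13 : ℝ := (2 : ℝ) ^ ((1 : ℝ) / 3)

/-- `Q̆_i = −2^{-1/3}(p_i/q_i − i g/(2 q_i²))` at `t = −s/2^{1/3}`. -/
noncomputable def Qc {n : ℕ} (g : ℂ) (p q : Fin n → ℝ → ℂ) (i : Fin n) (s : ℝ) : ℂ :=
  -(c13 : ℂ)⁻¹ * (p i (-s / c13) / q i (-s / c13)
    - Complex.I * g / (2 * q i (-s / c13) ^ 2))

/-- `P̆_i = 2^{1/3} q_i²` at `t = −s/2^{1/3}`. -/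
noncomputable def Pc {n : ℕ} (q : Fin n → ℝ → ℂ) (i : Fin n) (s : ℝ) : ℂ :=
  (c13 : ℂ) * q i (-s / c13) ^ 2

/-- The reduced 2n-particle Calogero–Painlevé II system maps to n-particle
Calogero–Painlevé II with coupling 2g in the variables `(P̆, Q̆)`. -/
theorem calogeroPII_reduction (n : ℕ) (g : ℂ) (p q : Fin n → ℝ → ℂ)
    (hq : ∀ (i : Fin n) (t : ℝ), HasDerivAt (q i) (p i t) t)
    (hp : ∀ (i : Fin n) (t : ℝ), HasDerivAt (p i)
      (2 * q i t ^ 3 + (t : ℂ) * q i t + g ^ 2 / (4 * q i t ^ 3)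
        + 4 * g ^ 2 * ∑ j ∈ univ.erase i,
            q i t * (q i t ^ 2 + 3 * q j t ^ 2) / (q i t ^ 2 - q j t ^ 2) ^ 3) t)
    (hne : ∀ (i : Fin n) (t : ℝ), q i t ≠ 0)
    (hdist : ∀ (i j : Fin n) (t : ℝ), i ≠ j → q i t ^ 2 ≠ q j t ^ 2) :
    ∀ (i : Fin n) (s : ℝ),
      HasDerivAt (Pc q i) (2 * Pc q i s * Qc g p q i s - Complex.I * g) s ∧
      HasDerivAt (Qc g p q i)
        (Pc q i s - (Qc g p q i s) ^ 2 - (s : ℂ) / 2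
          + 4 * g ^ 2 * ∑ j ∈ univ.erase i,
              (Pc q i s + 3 * Pc q j s) / (Pc q i s - Pc q j s) ^ 3) s := by
  intro i s
  have hcpos : (0:ℝ) < c13 := by unfold c13; positivity
  have hc : (c13:ℝ) ≠ 0 := ne_of_gt hcpos
  have hcC : (c13:ℂ) ≠ 0 := by exact_mod_cast hc
  have hc3 : (c13:ℂ)^3 = 2 := by
    have h : (c13:ℝ)^3 = 2 := by
      rw [c13, ← Real.rpow_natCast ((2:ℝ) ^ ((1:ℝ)/3)) 3,
        ← Real.rpow_mul (by norm_num : (0:ℝ) ≤ 2)]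
      norm_num
    exact_mod_cast h
  have hinv2 : ((c13:ℂ)⁻¹)^2 = c13 / 2 := by
    field_simp
    linear_combination -hc3
  have hc13y : (c13:ℂ) = 2 * ((c13:ℂ)⁻¹)^2 := by rw [hinv2]; field_simp
  set t : ℝ := -s / c13 with ht
  have hsC : (s:ℂ) = -(c13:ℂ) * (t:ℂ) := by
    have : (s:ℝ) = -c13 * t := by rw [ht]; field_simp
    exact_mod_cast congrArg (Complex.ofReal) this
  have hin : HasDerivAt (fun s : ℝ => -s / c13) (-1 / c13) s := by
    simpa using ((hasDerivAt_id s).neg.div_const c13)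
  have hsmul : ∀ z : ℂ, ((-1/c13 : ℝ)) • z = -(c13:ℂ)⁻¹ * z := by
    intro z
    rw [Complex.real_smul]
    push_cast
    ring
  set Q : ℂ := q i t with hQ
  set P : ℂ := p i t with hP
  have hQne : Q ≠ 0 := hne i t
  have hqs : HasDerivAt (fun s : ℝ => q i (-s / c13)) (-(c13:ℂ)⁻¹ * P) s := by
    have h := (hq i t).scomp s hin
    rwa [hsmul] at h
  set pd : ℂ := 2 * Q ^ 3 + (t : ℂ) * Q + g ^ 2 / (4 * Q ^ 3)
        + 4 * g ^ 2 * ∑ j ∈ univ.erase i,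
            Q * (Q ^ 2 + 3 * q j t ^ 2) / (Q ^ 2 - q j t ^ 2) ^ 3 with hpd
  have hps : HasDerivAt (fun s : ℝ => p i (-s / c13)) (-(c13:ℂ)⁻¹ * pd) s := by
    have h := (hp i t).scomp s hin
    rwa [hsmul] at h
  set A : ℂ := ∑ j ∈ univ.erase i, (Q ^ 2 + 3 * q j t ^ 2) / (Q ^ 2 - q j t ^ 2) ^ 3 with hA
  have hS1 : ∑ j ∈ univ.erase i,
      Q * (Q ^ 2 + 3 * q j t ^ 2) / (Q ^ 2 - q j t ^ 2) ^ 3 = Q * A := by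
    rw [hA, Finset.mul_sum]
    exact Finset.sum_congr rfl fun j _ => (mul_div_assoc _ _ _)
  have hq2 : HasDerivAt (fun s : ℝ => q i (-s / c13) ^ 2)
      (2 * q i (-s/c13) * (-(c13:ℂ)⁻¹ * P)) s := by
    simp only [pow_two]
    refine (hqs.fun_mul hqs).congr_deriv ?_
    ring
  -- Part 1
  have hPc : HasDerivAt (Pc q i) ((c13:ℂ) * (2 * q i (-s/c13) * (-(c13:ℂ)⁻¹ * P))) s :=
    hq2.const_mul _
  constructor
  · convert hPc using 1
    simp only [Pc, Qc, ← ht, ← hQ, ← hP]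
    have hy3 : ((c13:ℂ)⁻¹)^3 = 1/2 := by rw [inv_pow, hc3]; norm_num
    set y : ℂ := (c13:ℂ)⁻¹ with hy
    rw [hc13y]
    field_simp
    have hy3' : ((c13:ℂ)⁻¹)^3 = 1/2 := by rw [inv_pow, hc3]; norm_num
    linear_combination (2 * Complex.I * g) * hy3'
  -- Part 2
  · have hQ2ne : 2 * q i (-s/c13) ^ 2 ≠ 0 := by
      rw [← ht, ← hQ]; exact mul_ne_zero two_ne_zero (pow_ne_zero 2 hQne)
    have hqne' : q i (-s/c13) ≠ 0 := by rw [← ht, ← hQ]; exact hQne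
    have hQ2 : HasDerivAt (fun s : ℝ => 2 * q i (-s/c13) ^ 2)
        (2 * (2 * q i (-s/c13) * (-(c13:ℂ)⁻¹ * P))) s := hq2.const_mul 2
    have h1 : HasDerivAt (fun s : ℝ => p i (-s/c13) / q i (-s/c13))
        (((-(c13:ℂ)⁻¹ * pd) * q i (-s/c13) - p i (-s/c13) * (-(c13:ℂ)⁻¹ * P))
          / q i (-s/c13) ^ 2) s := hps.div hqs hqne'
    have h2 : HasDerivAt (fun s : ℝ => Complex.I * g / (2 * q i (-s/c13) ^ 2))
        ((0 * (2 * q i (-s/c13) ^ 2) - Complex.I * g *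
            (2 * (2 * q i (-s/c13) * (-(c13:ℂ)⁻¹ * P))))
          / (2 * q i (-s/c13) ^ 2) ^ 2) s :=
      (hasDerivAt_const s (Complex.I * g)).div hQ2 hQ2ne
    have hQc : HasDerivAt (Qc g p q i) (-(c13:ℂ)⁻¹ *
        (((-(c13:ℂ)⁻¹ * pd) * q i (-s/c13) - p i (-s/c13) * (-(c13:ℂ)⁻¹ * P))
          / q i (-s/c13) ^ 2 -
         (0 * (2 * q i (-s/c13) ^ 2) - Complex.I * g *
            (2 * (2 * q i (-s/c13) * (-(c13:ℂ)⁻¹ * P))))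
          / (2 * q i (-s/c13) ^ 2) ^ 2)) s := (h1.sub h2).const_mul _
    convert hQc using 1
    have hsum : ∑ j ∈ univ.erase i, (Pc q i s + 3 * Pc q j s) / (Pc q i s - Pc q j s) ^ 3
        = ((c13:ℂ)⁻¹)^2 * A := by
      rw [hA, Finset.mul_sum]
      apply Finset.sum_congr rfl
      intro j hj
      have hij : i ≠ j := (Finset.ne_of_mem_erase hj).symm
      have hd : Q ^ 2 - q j t ^ 2 ≠ 0 := sub_ne_zero.mpr (hdist i j t hij)
      simp only [Pc, ← ht, ← hQ]
      rw [show (c13:ℂ) * Q ^ 2 - c13 * q j t ^ 2 = c13 * (Q ^ 2 - q j t ^ 2) from by ring,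
        mul_pow, hc3, hinv2]
      field_simp [hd]
    rw [hsum]
    simp only [Pc, Qc, ← ht, ← hQ, ← hP, hpd, hS1, hsC]
    set y : ℂ := (c13:ℂ)⁻¹ with hy
    rw [hc13y]
    field_simp [hQne]
    ring_nf
    simp only [Complex.I_sq]
    ring
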